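/- If G₁ and G₂ are finite groups, then the free product G₁ ∗ G₂ is virtually free: it contains a subgroup of finite index which is a free group. -/

import Mathlib

set_option linter.unusedSectionVars false
set_option linter.unusedVariables false
set_option maxHeartbeats 1000000

/-- A group is virtually free if it has a free subgroup of finite index. -/
def VirtuallyFree (G : Type) [Group G] : Prop :=
  ∃ H : Subgroup G, H.FiniteIndex ∧ IsFreeGroup H

open Monoid Monoid.CoprodI Pointwise

namespace VFaux

/-! ### Generic word lemmas -/

section Words
variable {ι : Type} [DecidableEq ι] {M : ι → Type} [∀ i, Group (M i)] [∀ i, DecidableEq (M i)]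

theorem fstIdx_of_toList {w : Word M} {l : Σ i, M i} {r} (h : w.toList = l :: r) :
    w.fstIdx = some l.1 := by
  simp [Word.fstIdx, h]

theorem smul_toList {i : ι} (m : M i) (hm : m ≠ 1) (w : Word M) (hw : w.fstIdx ≠ some i) :
    (CoprodI.of m • w).toList = ⟨i, m⟩ :: w.toList := by
  rw [← Word.cons_eq_smul (h1 := hw) (h2 := hm)]
  rfl

def mkTail (w : Word M) {i : ι} {m : M i} {rest} (h : w.toList = ⟨i, m⟩ :: rest) : Word M :=
  { toList := rest
    ne_one := fun l hl => w.ne_one l (h ▸ List.mem_cons_of_mem _ hl)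
    chain_ne := by
      have := w.chain_ne
      rw [h] at this
      exact this.tail }

@[simp] theorem mkTail_toList (w : Word M) {i : ι} {m : M i} {rest}
    (h : w.toList = ⟨i, m⟩ :: rest) : (mkTail w h).toList = rest := rfl

theorem mkTail_fstIdx (w : Word M) {i : ι} {m : M i} {rest} (h : w.toList = ⟨i, m⟩ :: rest) :
    (mkTail w h).fstIdx ≠ some i := by
  have hc := w.chain_ne
  rw [h, List.isChain_cons] at hc
  rw [Word.fstIdx_ne_iff]
  intro l hl
  exact (hc.1 l (by simpa [Word.fstIdx] using hl)).symm ∘ Eq.symm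

theorem eq_smul_mkTail (w : Word M) {i : ι} {m : M i} {rest} (h : w.toList = ⟨i, m⟩ :: rest) :
    w = CoprodI.of m • mkTail w h := by
  have hm : m ≠ 1 := w.ne_one ⟨i, m⟩ (h ▸ List.mem_cons_self)
  rw [← Word.cons_eq_smul (h1 := mkTail_fstIdx w h) (h2 := hm)]
  ext1
  simp [h]

/-- Words on which the commutator of `x` and `y` acts nicely. -/
def Dset (i j : ι) (x : M i) (y : M j) : Set (Word M) :=
  {w | w.toList = [] ∨ (∃ x' r, w.toList = ⟨i, x'⟩ :: r) ∨
    (∃ y' x' r, w.toList = ⟨j, y'⟩ :: ⟨i, x'⟩ :: r ∧ ¬(x' = x ∧ y' = y))}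

/-- Words starting with the two letters `x`, `y`. -/
def Pref (i j : ι) (x : M i) (y : M j) : Set (Word M) :=
  {w | ∃ r, w.toList = ⟨i, x⟩ :: ⟨j, y⟩ :: r}

theorem Pref_subset_Dset {i j : ι} {x a : M i} {y b : M j} :
    Pref i j a b ⊆ Dset i j x y := by
  rintro w ⟨r, hr⟩
  exact Or.inr (Or.inl ⟨a, _, hr⟩)

theorem comm_smul_mem_Pref {i j : ι} (hij : i ≠ j) {x : M i} {y : M j}
    (hx : x ≠ 1) (hy : y ≠ 1) {w : Word M} (hw : w ∈ Dset i j x y) :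
    (CoprodI.of x * CoprodI.of y * CoprodI.of x⁻¹ * CoprodI.of y⁻¹) • w ∈ Pref i j x y := by
  have hxi : x⁻¹ ≠ 1 := inv_ne_one.2 hx
  have hyi : y⁻¹ ≠ 1 := inv_ne_one.2 hy
  have key : ∃ u : Word M, (CoprodI.of x⁻¹ * CoprodI.of y⁻¹) • w = u ∧
      (u.toList = [⟨i, x⁻¹⟩] ∨ ∃ m r, u.toList = ⟨i, m⟩ :: r) := by
    rcases hw with h0 | ⟨x', r, h1⟩ | ⟨y', x', r, h2, hne⟩
    · have hfst : w.fstIdx ≠ some j := by simp [Word.fstIdx, h0]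
      have l1 : (CoprodI.of y⁻¹ • w).toList = ⟨j, y⁻¹⟩ :: w.toList :=
        smul_toList _ hyi _ hfst
      have l2 : ((CoprodI.of x⁻¹ * CoprodI.of y⁻¹) • w).toList
          = ⟨i, x⁻¹⟩ :: ⟨j, y⁻¹⟩ :: w.toList := by
        rw [mul_smul, smul_toList _ hxi _ (by rw [fstIdx_of_toList l1]; simpa using hij.symm), l1]
      exact ⟨_, rfl, Or.inr ⟨x⁻¹, _, by rw [l2, h0]⟩⟩
    · have l1 : (CoprodI.of y⁻¹ • w).toList = ⟨j, y⁻¹⟩ :: w.toList :=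
        smul_toList _ hyi _ (by rw [fstIdx_of_toList h1]; simpa using hij)
      have l2 : ((CoprodI.of x⁻¹ * CoprodI.of y⁻¹) • w).toList
          = ⟨i, x⁻¹⟩ :: ⟨j, y⁻¹⟩ :: w.toList := by
        rw [mul_smul, smul_toList _ hxi _ (by rw [fstIdx_of_toList l1]; simpa using hij.symm), l1]
      exact ⟨_, rfl, Or.inr ⟨x⁻¹, _, l2⟩⟩
    · set t := mkTail w h2 with ht
      have hw' : w = CoprodI.of y' • t := eq_smul_mkTail w h2
      have htt : t.toList = ⟨i, x'⟩ :: r := rfl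
      by_cases hyy : y' = y
      · have hxx : x' ≠ x := fun h => hne ⟨h, hyy⟩
        have hcan : (CoprodI.of y⁻¹ : CoprodI M) • w = t := by
          rw [hw', ← mul_smul, ← map_mul, hyy, inv_mul_cancel, map_one, one_smul]
        set u := mkTail t htt with hu
        have ht' : t = CoprodI.of x' • u := eq_smul_mkTail t htt
        have hxm : x⁻¹ * x' ≠ 1 := by
          rw [Ne, inv_mul_eq_one]
          exact fun h => hxx h.symm
        have l2 : ((CoprodI.of x⁻¹ * CoprodI.of y⁻¹) • w).toList
            = ⟨i, x⁻¹ * x'⟩ :: r := by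
          rw [mul_smul, hcan, ht', ← mul_smul, ← map_mul,
            smul_toList _ hxm _ (mkTail_fstIdx t htt)]
          rfl
        exact ⟨_, rfl, Or.inr ⟨_, _, l2⟩⟩
      · have hym : y⁻¹ * y' ≠ 1 := by
          rw [Ne, inv_mul_eq_one]
          exact fun h => hyy h.symm
        have l1 : ((CoprodI.of y⁻¹ : CoprodI M) • w).toList
            = ⟨j, y⁻¹ * y'⟩ :: ⟨i, x'⟩ :: r := by
          rw [hw', ← mul_smul, ← map_mul, smul_toList _ hym _ (mkTail_fstIdx w h2), htt]
        have l2 : ((CoprodI.of x⁻¹ * CoprodI.of y⁻¹) • w).toList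
            = ⟨i, x⁻¹⟩ :: ⟨j, y⁻¹ * y'⟩ :: ⟨i, x'⟩ :: r := by
          rw [mul_smul, smul_toList _ hxi _ (by rw [fstIdx_of_toList l1]; simpa using hij.symm), l1]
        exact ⟨_, rfl, Or.inr ⟨x⁻¹, _, l2⟩⟩
  obtain ⟨u, hu, hcase⟩ := key
  have hufst : ∃ m r, u.toList = ⟨i, m⟩ :: r := by
    rcases hcase with h | h
    · exact ⟨x⁻¹, [], h⟩
    · exact h
  obtain ⟨m, r, hur⟩ := hufst
  have l3 : ((CoprodI.of y : CoprodI M) • u).toList = ⟨j, y⟩ :: u.toList :=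
    smul_toList _ hy _ (by rw [fstIdx_of_toList hur]; simpa using hij)
  have l4 : ((CoprodI.of x * CoprodI.of y : CoprodI M) • u).toList
      = ⟨i, x⟩ :: ⟨j, y⟩ :: u.toList := by
    rw [mul_smul, smul_toList _ hx _ (by rw [fstIdx_of_toList l3]; simpa using hij.symm), l3]
  refine ⟨u.toList, ?_⟩
  have : (CoprodI.of x * CoprodI.of y * CoprodI.of x⁻¹ * CoprodI.of y⁻¹) • w
      = (CoprodI.of x * CoprodI.of y) • ((CoprodI.of x⁻¹ * CoprodI.of y⁻¹) • w) := by
    rw [mul_assoc, mul_smul]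
  rw [this, hu, l4]

theorem comm_inv {i j : ι} (x : M i) (y : M j) :
    (CoprodI.of x * CoprodI.of y * CoprodI.of x⁻¹ * CoprodI.of y⁻¹ : CoprodI M)⁻¹
      = CoprodI.of y * CoprodI.of x * CoprodI.of y⁻¹ * CoprodI.of x⁻¹ := by
  simp [mul_assoc]

theorem comm_zpow_smul_mem_pos {i j : ι} (hij : i ≠ j) {x : M i} {y : M j}
    (hx : x ≠ 1) (hy : y ≠ 1) {n : ℤ} (hn : 0 < n) {w : Word M} (hw : w ∈ Dset i j x y) :
    ((CoprodI.of x * CoprodI.of y * CoprodI.of x⁻¹ * CoprodI.of y⁻¹) ^ n) • w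
      ∈ Pref i j x y := by
  set d : CoprodI M := CoprodI.of x * CoprodI.of y * CoprodI.of x⁻¹ * CoprodI.of y⁻¹ with hd
  refine Int.le_induction (motive := fun n _ => d ^ n • w ∈ Pref i j x y) ?_ ?_ n hn
  · simp only [zero_add, zpow_one]
    exact comm_smul_mem_Pref hij hx hy hw
  · intro n _ ih
    have : d ^ (n + 1) = d * d ^ n := by
      rw [add_comm, zpow_one_add]
    rw [this, mul_smul]
    exact comm_smul_mem_Pref hij hx hy (Pref_subset_Dset ih)

theorem comm_zpow_smul_mem {i j : ι} (hij : i ≠ j) {x : M i} {y : M j}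
    (hx : x ≠ 1) (hy : y ≠ 1) {n : ℤ} (hn : n ≠ 0) {w : Word M}
    (h1 : w ∈ Dset i j x y) (h2 : w ∈ Dset j i y x) :
    ((CoprodI.of x * CoprodI.of y * CoprodI.of x⁻¹ * CoprodI.of y⁻¹) ^ n) • w
      ∈ Pref i j x y ∪ Pref j i y x := by
  set d : CoprodI M := CoprodI.of x * CoprodI.of y * CoprodI.of x⁻¹ * CoprodI.of y⁻¹ with hd
  rcases hn.lt_or_gt with h | h
  · right
    have hdn : d ^ n = (d⁻¹) ^ (-n) := by rw [inv_zpow, zpow_neg, inv_inv]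
    rw [hdn, hd, comm_inv]
    exact comm_zpow_smul_mem_pos hij.symm hy hx (by omega) h2
  · left
    exact comm_zpow_smul_mem_pos hij hx hy h h1

theorem Pref_inter {i j i' j' : ι} {x : M i} {y : M j} {x' : M i'} {y' : M j'} {w : Word M}
    (h : w ∈ Pref i j x y) (h' : w ∈ Pref i' j' x' y') :
    (⟨i, x⟩ : Σ k, M k) = ⟨i', x'⟩ ∧ (⟨j, y⟩ : Σ k, M k) = ⟨j', y'⟩ := by
  obtain ⟨r, hr⟩ := h
  obtain ⟨r', hr'⟩ := h'
  rw [hr] at hr'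
  injection hr' with h1 h2
  injection h2 with h3 _
  exact ⟨h1, h3⟩

end Words

/-! ### Generalities on virtually free groups -/

theorem isFreeGroup_of_subsingleton (T : Type) [Group T] [Subsingleton T] : IsFreeGroup T :=
  FreeGroupBasis.isFreeGroup (ι := Empty)
    ⟨{ toFun := fun _ => 1
       invFun := fun _ => 1
       left_inv := fun _ => Subsingleton.elim _ _
       right_inv := fun _ => Subsingleton.elim _ _
       map_mul' := fun _ _ => Subsingleton.elim _ _ }⟩

theorem virtuallyFree_of_finite {G : Type} [Group G] [Finite G] : VirtuallyFree G :=
  ⟨⊥, inferInstance, isFreeGroup_of_subsingleton _⟩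

theorem virtuallyFree_congr {G G' : Type} [Group G] [Group G'] (e : G ≃* G') :
    VirtuallyFree G → VirtuallyFree G' := by
  rintro ⟨H, hfi, hfree⟩
  refine ⟨H.map e.toMonoidHom, ⟨?_⟩, ?_⟩
  · rw [Subgroup.index_map]
    have h1 : (e.toMonoidHom : G →* G').ker = ⊥ :=
      (MonoidHom.ker_eq_bot_iff _).mpr e.injective
    have h2 : (e.toMonoidHom : G →* G').range = ⊤ :=
      MonoidHom.range_eq_top.mpr e.surjective
    rw [h1, h2, sup_bot_eq, Subgroup.index_top, mul_one]
    exact hfi.index_ne_zero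
  · haveI := hfree
    exact IsFreeGroup.ofMulEquiv (e.subgroupMap H)

/-! ### The two-factor free product as an indexed free product -/

section Main
variable (A B : Type) [Group A] [Group B]

abbrev Fam : Bool → Type := fun b => Bool.rec B A b

instance famGroup : ∀ b, Group (Fam A B b) := fun b => match b with
  | true => ‹Group A›
  | false => ‹Group B›

variable {A B}
def inl1 : A →* CoprodI (Fam A B) := (CoprodI.of : Fam A B true →* CoprodI (Fam A B))
def inr1 : B →* CoprodI (Fam A B) := (CoprodI.of : Fam A B false →* CoprodI (Fam A B))
variable (A B)

def coprodEquiv : Monoid.Coprod A B ≃* CoprodI (Fam A B) :=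
  MonoidHom.toMulEquiv
    (Coprod.lift inl1 inr1)
    (CoprodI.lift (fun b => match b with
      | true => (Coprod.inl : A →* Coprod A B)
      | false => (Coprod.inr : B →* Coprod A B)))
    (by
      apply Coprod.hom_ext <;> ext x <;>
        simp [inl1, inr1, Coprod.lift_apply_inl, Coprod.lift_apply_inr, CoprodI.lift_of])
    (by
      apply CoprodI.ext_hom
      intro i
      cases i <;> ext x <;>
        simp [inl1, inr1, Coprod.lift_apply_inl, Coprod.lift_apply_inr, CoprodI.lift_of])

theorem coprod_equiv_self_of_subsingleton_right [Subsingleton B] :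
    Nonempty (Monoid.Coprod A B ≃* A) := by
  refine ⟨MonoidHom.toMulEquiv (Coprod.lift (MonoidHom.id A) 1) Coprod.inl ?_ ?_⟩
  · apply Coprod.hom_ext
    · ext x; simp
    · ext x
      obtain rfl : x = 1 := Subsingleton.elim _ _
      simp
  · ext x; simp

theorem coprod_equiv_self_of_subsingleton_left [Subsingleton A] :
    Nonempty (Monoid.Coprod A B ≃* B) := by
  refine ⟨MonoidHom.toMulEquiv (Coprod.lift 1 (MonoidHom.id B)) Coprod.inr ?_ ?_⟩
  · apply Coprod.hom_ext
    · ext x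
      obtain rfl : x = 1 := Subsingleton.elim _ _
      simp
    · ext x; simp
  · ext x; simp

/-! ### The kernel of the projection to the direct product -/

def proj : CoprodI (Fam A B) →* A × B :=
  CoprodI.lift (fun b => match b with
    | true => MonoidHom.inl A B
    | false => MonoidHom.inr A B)

@[simp] theorem proj_inl1 (a : A) : proj A B (inl1 a) = (a, 1) := by
  simp [proj, inl1, CoprodI.lift_of]

@[simp] theorem proj_inr1 (b : B) : proj A B (inr1 b) = (1, b) := by
  simp [proj, inr1, CoprodI.lift_of]

variable {A B}

def com (p : A × B) : CoprodI (Fam A B) :=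
  inl1 p.1 * inr1 p.2 * (inl1 p.1)⁻¹ * (inr1 p.2)⁻¹

variable (A B)

def NN : Subgroup (CoprodI (Fam A B)) := Subgroup.closure (Set.range (com (A := A) (B := B)))

variable {A B}

theorem com_mem (p : A × B) : com p ∈ NN A B := Subgroup.subset_closure ⟨p, rfl⟩

theorem conj_com_inl (c : A) (p : A × B) :
    inl1 c * com p * (inl1 (A := A) (B := B) c)⁻¹
      = com (c * p.1, p.2) * (com (c, p.2))⁻¹ := by
  obtain ⟨a, b⟩ := p
  simp only [com, map_mul]
  group

theorem conj_com_inr (d : B) (p : A × B) :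
    inr1 d * com p * (inr1 (A := A) (B := B) d)⁻¹
      = (com (p.1, d))⁻¹ * com (p.1, d * p.2) := by
  obtain ⟨a, b⟩ := p
  simp only [com, map_mul]
  group

theorem of_conj_mem_NN (i : Bool) (m : Fam A B i) {n : CoprodI (Fam A B)} (hn : n ∈ NN A B) :
    CoprodI.of m * n * (CoprodI.of m)⁻¹ ∈ NN A B := by
  have key : Subgroup.map (MulAut.conj (CoprodI.of m)).toMonoidHom (NN A B) ≤ NN A B := by
    rw [NN, MonoidHom.map_closure, Subgroup.closure_le]
    rintro z ⟨_, ⟨p, rfl⟩, rfl⟩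
    show MulAut.conj (CoprodI.of m) (com p) ∈ NN A B
    rw [MulAut.conj_apply]
    cases i
    · rw [show (CoprodI.of m : CoprodI (Fam A B)) = inr1 m from rfl, conj_com_inr]
      exact mul_mem (inv_mem (com_mem _)) (com_mem _)
    · rw [show (CoprodI.of m : CoprodI (Fam A B)) = inl1 m from rfl, conj_com_inl]
      exact mul_mem (com_mem _) (inv_mem (com_mem _))
  exact key ⟨n, hn, rfl⟩

instance NN_normal : (NN A B).Normal := by
  constructor
  intro n hn g
  induction g using CoprodI.induction_left with
  | one => simpa using hn
  | mul m x hx =>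
    rename_i i
    rw [mul_inv_rev, show CoprodI.of m * x * n * (x⁻¹ * (CoprodI.of m)⁻¹)
      = CoprodI.of m * (x * n * x⁻¹) * (CoprodI.of m)⁻¹ by group]
    exact of_conj_mem_NN i m hx

theorem ker_proj_eq_NN : (proj A B).ker = NN A B := by
  apply le_antisymm
  · set q := QuotientGroup.mk' (NN A B) with hq
    have hcomm : ∀ (a : A) (b : B), Commute (q (inl1 a)) (q (inr1 b)) := by
      intro a b
      rw [← commutatorElement_eq_one_iff_commute]
      have : q (com (a, b)) = 1 := (QuotientGroup.eq_one_iff _).mpr (com_mem (a, b))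
      simpa [com, commutatorElement_def, map_mul] using this
    set ρ : A × B →* CoprodI (Fam A B) ⧸ NN A B :=
      MonoidHom.noncommCoprod (q.comp inl1) (q.comp inr1) hcomm with hρ
    have hfact : ρ.comp (proj A B) = q := by
      apply CoprodI.ext_hom
      intro i
      cases i
      · ext m
        simp only [MonoidHom.comp_apply]
        show ρ (proj A B (inr1 m)) = q (inr1 m)
        simp only [proj_inr1]
        simp [hρ, MonoidHom.noncommCoprod_apply]
      · ext m
        simp only [MonoidHom.comp_apply]
        show ρ (proj A B (inl1 m)) = q (inl1 m)
        simp only [proj_inl1]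
        simp [hρ, MonoidHom.noncommCoprod_apply]
    intro g hg
    have : q g = 1 := by
      rw [← hfact]
      simp only [MonoidHom.comp_apply]
      rw [show proj A B g = 1 from hg]
      simp
    exact (QuotientGroup.eq_one_iff _).mp this
  · rw [NN, Subgroup.closure_le]
    rintro z ⟨p, rfl⟩
    show proj A B (com p) = 1
    simp [com, map_mul, map_inv, Prod.ext_iff]

/-! ### The free generating family -/

variable (A B)

abbrev SS : Type := {p : A × B // p.1 ≠ 1 ∧ p.2 ≠ 1}

abbrev Hfam : Option (SS A B) → Type := fun o =>
  Option.rec (FreeGroup Empty) (fun _ => FreeGroup Unit) o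

instance hfamGroup : ∀ o, Group (Hfam A B o) := fun o => match o with
  | none => inferInstanceAs (Group (FreeGroup Empty))
  | some _ => inferInstanceAs (Group (FreeGroup Unit))

instance hfamFree : ∀ o, IsFreeGroup (Hfam A B o) := fun o => match o with
  | none => inferInstanceAs (IsFreeGroup (FreeGroup Empty))
  | some _ => inferInstanceAs (IsFreeGroup (FreeGroup Unit))

def ff : ∀ o, Hfam A B o →* CoprodI (Fam A B) := fun o => match o with
  | none => 1
  | some s => FreeGroup.lift (fun _ => com s.1)

theorem range_ff : (CoprodI.lift (ff A B)).range = NN A B := by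
  rw [CoprodI.range_eq_iSup, iSup_option]
  have h0 : (ff A B none).range = ⊥ := MonoidHom.range_one
  have hs : ∀ s : SS A B, (ff A B (some s)).range = Subgroup.closure {com s.1} := by
    intro s
    show (FreeGroup.lift _).range = _
    rw [FreeGroup.range_lift_eq_closure, Set.range_const]
  simp only [h0, hs, bot_sup_eq]
  rw [← Subgroup.closure_iUnion]
  apply le_antisymm
  · apply Subgroup.closure_mono
    rintro z hz
    simp only [Set.mem_iUnion, Set.mem_singleton_iff] at hz
    obtain ⟨s, rfl⟩ := hz
    exact ⟨s.1, rfl⟩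
  · rw [NN, Subgroup.closure_le]
    rintro z ⟨p, rfl⟩
    by_cases h1 : p.1 = 1
    · have : com p = 1 := by
        obtain ⟨a, b⟩ := p
        obtain rfl : a = 1 := h1
        simp [com]
      rw [this]
      exact one_mem _
    by_cases h2 : p.2 = 1
    · have : com p = 1 := by
        obtain ⟨a, b⟩ := p
        obtain rfl : b = 1 := h2
        simp [com]
      rw [this]
      exact one_mem _
    · apply Subgroup.subset_closure
      simp only [Set.mem_iUnion, Set.mem_singleton_iff]
      exact ⟨⟨p, h1, h2⟩, rfl⟩

/-! ### Injectivity via ping-pong -/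

theorem main_nontrivial [Nontrivial A] [Nontrivial B] [Finite A] [Finite B] :
    VirtuallyFree (CoprodI (Fam A B)) := by
  classical
  obtain ⟨a₀, ha₀⟩ := exists_ne (1 : A)
  obtain ⟨b₀, hb₀⟩ := exists_ne (1 : B)
  have s₀ : SS A B := ⟨(a₀, b₀), ha₀, hb₀⟩
  haveI : Nonempty (SS A B) := ⟨s₀⟩
  haveI : Nontrivial (Option (SS A B)) := Option.nontrivial
  -- the ping-pong sets
  set X : Option (SS A B) → Set (Word (Fam A B)) := fun o =>
    Option.rec {w | w.toList = []}
      (fun s => Pref true false s.1.1 s.1.2 ∪ Pref false true s.1.2 s.1.1) o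
    with hX
  have htf : (true : Bool) ≠ false := by decide
  -- injectivity via the ping-pong lemma
  have hcard : 3 ≤ Cardinal.mk (Option (SS A B)) ∨ ∃ o, 3 ≤ Cardinal.mk (Hfam A B o) := by
    right
    refine ⟨some s₀, ?_⟩
    show (3 : Cardinal) ≤ Cardinal.mk (FreeGroup Unit)
    calc (3 : Cardinal) ≤ Cardinal.aleph0 := by
          exact_mod_cast (Cardinal.nat_lt_aleph0 3).le
      _ = Cardinal.mk ℤ := Cardinal.mk_int.symm
      _ = Cardinal.mk (FreeGroup Unit) :=
          (Cardinal.mk_congr FreeGroup.freeGroupUnitEquivInt).symm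
  have hXne : ∀ o, (X o).Nonempty := by
    intro o
    match o with
    | none => exact ⟨Word.empty, rfl⟩
    | some s =>
      refine ⟨⟨[⟨true, s.1.1⟩, ⟨false, s.1.2⟩], ?_, ?_⟩, Or.inl ⟨[], rfl⟩⟩
      · rintro l hl
        simp only [List.mem_cons, List.mem_singleton, List.not_mem_nil, or_false] at hl
        rcases hl with rfl | rfl
        · exact s.2.1
        · exact s.2.2
      · simp
  have hXdisj : Pairwise (Function.onFun Disjoint X) := by
    intro o o' hoo'
    rw [Function.onFun, Set.disjoint_left]
    intro w hw hw'
    match o, o' with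
    | none, none => exact hoo' rfl
    | none, some t =>
      have hnil : w.toList = [] := hw
      rcases hw' with ⟨r, hr⟩ | ⟨r, hr⟩ <;> rw [hnil] at hr <;> exact nomatch hr
    | some s, none =>
      have hnil : w.toList = [] := hw'
      rcases hw with ⟨r, hr⟩ | ⟨r, hr⟩ <;> rw [hnil] at hr <;> exact nomatch hr
    | some s, some t =>
      have hst : s ≠ t := fun h => hoo' (by rw [h])
      have hkey : s.1 = t.1 → False := fun h => hst (Subtype.ext h)
      rcases hw with h1 | h1 <;> rcases hw' with h2 | h2
      · obtain ⟨e1, e2⟩ := Pref_inter h1 h2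
        injection e1 with _ e1b
        injection e2 with _ e2b
        exact hkey (Prod.ext e1b e2b)
      · obtain ⟨e1, _⟩ := Pref_inter h1 h2
        injection e1 with e1a _
        exact Bool.noConfusion e1a
      · obtain ⟨e1, _⟩ := Pref_inter h1 h2
        injection e1 with e1a _
        exact Bool.noConfusion e1a
      · obtain ⟨e1, e2⟩ := Pref_inter h1 h2
        injection e1 with _ e1b
        injection e2 with _ e2b
        exact hkey (Prod.ext e2b e1b)
  have hpp : Pairwise fun o o' => ∀ h : Hfam A B o, h ≠ 1 → ff A B o h • X o' ⊆ X o := by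
    intro o o' hoo'
    match o with
    | none =>
      intro h hh
      exact absurd (Subsingleton.elim h 1) hh
    | some s =>
      intro h hh
      obtain ⟨⟨a, b⟩, ha, hb⟩ := s
      -- represent h as a power of the generator
      set n : ℤ := FreeGroup.freeGroupUnitEquivInt h with hn
      have hrep : h = FreeGroup.of () ^ n :=
        (FreeGroup.freeGroupUnitEquivInt.symm_apply_apply h).symm
      have hn0 : n ≠ 0 := by
        intro h0
        apply hh
        rw [hrep, h0, zpow_zero]
      have hcom : com ((a, b) : A × B)
          = CoprodI.of (M := Fam A B) (i := true) a * CoprodI.of (M := Fam A B) (i := false) b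
            * CoprodI.of (M := Fam A B) (i := true) a⁻¹
            * CoprodI.of (M := Fam A B) (i := false) b⁻¹ := by
        show inl1 a * inr1 b * (inl1 a)⁻¹ * (inr1 b)⁻¹ = _
        rw [← map_inv, ← map_inv]
        rfl
      have hfh : ff A B (some ⟨(a, b), ha, hb⟩) h = com ((a, b) : A × B) ^ n := by
        show FreeGroup.lift (fun _ => com ((a, b) : A × B)) h = _
        rw [hrep, map_zpow, FreeGroup.lift_apply_of]
      rw [hfh, hcom, Set.smul_set_subset_iff]
      intro w hw
      -- the domain conditions
      have hd1 : w ∈ Dset true false (a : Fam A B true) (b : Fam A B false) := by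
        match o', hw with
        | none, hw => exact Or.inl hw
        | some t, Or.inl ⟨r, hr⟩ => exact Or.inr (Or.inl ⟨t.1.1, _, hr⟩)
        | some t, Or.inr ⟨r, hr⟩ =>
          refine Or.inr (Or.inr ⟨t.1.2, t.1.1, r, hr, ?_⟩)
          intro hcon
          exact hoo' (congrArg some (Subtype.ext (Prod.ext hcon.1 hcon.2)).symm)
      have hd2 : w ∈ Dset false true (b : Fam A B false) (a : Fam A B true) := by
        match o', hw with
        | none, hw => exact Or.inl hw
        | some t, Or.inl ⟨r, hr⟩ =>
          refine Or.inr (Or.inr ⟨t.1.1, t.1.2, r, hr, ?_⟩)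
          intro hcon
          exact hoo' (congrArg some (Subtype.ext (Prod.ext hcon.2 hcon.1)).symm)
        | some t, Or.inr ⟨r, hr⟩ => exact Or.inr (Or.inl ⟨t.1.2, _, hr⟩)
      exact comm_zpow_smul_mem htf ha hb hn0 hd1 hd2
  have hinj : Function.Injective (CoprodI.lift (ff A B)) :=
    CoprodI.lift_injective_of_ping_pong (ff A B) hcard X hXne hXdisj hpp
  -- conclude
  haveI : Finite ((proj A B).range : Subgroup (A × B)) := Subgroup.instFiniteSubtypeMem _
  refine ⟨(proj A B).ker, Subgroup.finiteIndex_ker _, ?_⟩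
  have hrange : (CoprodI.lift (ff A B)).range = (proj A B).ker := by
    rw [range_ff, ker_proj_eq_NN]
  haveI : IsFreeGroup (CoprodI (Hfam A B)) := inferInstance
  exact hrange ▸ IsFreeGroup.ofMulEquiv (MonoidHom.ofInjective hinj)

end Main
end VFaux

theorem stmt_5 (G₁ G₂ : Type) [Group G₁] [Group G₂] [Finite G₁] [Finite G₂] :
    VirtuallyFree (Monoid.Coprod G₁ G₂) := by
  rcases subsingleton_or_nontrivial G₁ with h1 | h1
  · obtain ⟨e⟩ := VFaux.coprod_equiv_self_of_subsingleton_left G₁ G₂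
    haveI : Finite (Monoid.Coprod G₁ G₂) := Finite.of_equiv _ e.symm.toEquiv
    exact VFaux.virtuallyFree_of_finite
  rcases subsingleton_or_nontrivial G₂ with h2 | h2
  · obtain ⟨e⟩ := VFaux.coprod_equiv_self_of_subsingleton_right G₁ G₂
    haveI : Finite (Monoid.Coprod G₁ G₂) := Finite.of_equiv _ e.symm.toEquiv
    exact VFaux.virtuallyFree_of_finite
  · exact VFaux.virtuallyFree_congr (VFaux.coprodEquiv G₁ G₂).symm
      (VFaux.main_nontrivial G₁ G₂)
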